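/- For timed words w_1, w_2 over alphabet Σ, the 0-eliminations satisfy ν(w_1) = ν(w_2) if and only if w_1 and w_2 admit decompositions w_i = u_i v_i where all events of u_i occur at time 0 and d(v_1, v_2) = 0. -/

import Mathlib

open scoped ENNReal

noncomputable def dirDist {α : Type*} (w v : List (α × ℝ)) : ℝ≥0∞ :=
  ⨆ i : Fin w.length, ⨅ j : {j : Fin v.length // (v.get j).1 = (w.get i).1},
    ENNReal.ofReal |(w.get i).2 - (v.get j.1).2|

noncomputable def tdist {α : Type*} (w v : List (α × ℝ)) : ℝ≥0∞ :=
  max (dirDist w v) (dirDist v w)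

/-- The 0-elimination of a timed word, viewed as the function assigning to each
positive time instant the set of letters occurring at that time (time-0 events
are discarded).  This data determines the 0-eliminated timed word
`(A_1,t_1)...(A_n,t_n)` uniquely. -/
def nuAbs {α : Type*} (w : List (α × ℝ)) : ℝ → Set α :=
  fun t => if 0 < t then {a | (a, t) ∈ w} else ∅


lemma dirDist_eq_zero {α : Type*} {w v : List (α × ℝ)} :
    dirDist w v = 0 ↔ ∀ x ∈ w, x ∈ v := by
  unfold dirDist
  rw [ENNReal.iSup_eq_zero]
  constructor
  · intro h x hx
    rw [List.mem_iff_get] at hx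
    obtain ⟨i, rfl⟩ := hx
    have hi := h i
    cases isEmpty_or_nonempty {j : Fin v.length // (v.get j).1 = (w.get i).1} with
    | inl he => rw [iInf_of_empty] at hi; simp at hi
    | inr hne =>
      obtain ⟨j, hj⟩ := Finite.exists_min
        (fun j : {j : Fin v.length // (v.get j).1 = (w.get i).1} =>
          ENNReal.ofReal |(w.get i).2 - (v.get j.1).2|)
      have hj0 : ENNReal.ofReal |(w.get i).2 - (v.get j.1).2| = 0 :=
        le_antisymm (hi ▸ le_iInf hj) bot_le
      rw [ENNReal.ofReal_eq_zero] at hj0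
      have ht : (v.get j.1).2 = (w.get i).2 := by
        have := le_antisymm hj0 (abs_nonneg _)
        have := abs_eq_zero.mp this
        linarith [sub_eq_zero.mp this]
      have : v.get j.1 = w.get i := Prod.ext j.2 ht
      exact this ▸ List.get_mem v j.1
  · intro h i
    have hx := h (w.get i) (List.get_mem w i)
    rw [List.mem_iff_get] at hx
    obtain ⟨j, hj⟩ := hx
    refine le_antisymm ?_ bot_le
    refine le_trans (iInf_le _ ⟨j, by rw [hj]⟩) ?_
    simp only [List.get_eq_getElem] at hj
    simp [hj]

lemma tdist_eq_zero {α : Type*} {w v : List (α × ℝ)} :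
    tdist w v = 0 ↔ (∀ x ∈ w, x ∈ v) ∧ (∀ x ∈ v, x ∈ w) := by
  rw [tdist, show (0 : ℝ≥0∞) = ⊥ from rfl, max_eq_bot]
  rw [show (⊥ : ℝ≥0∞) = 0 from rfl, dirDist_eq_zero, dirDist_eq_zero]

lemma dropWhile_pos {α : Type*} (l : List (α × ℝ)) (hnn : ∀ e ∈ l, 0 ≤ e.2)
    (hmono : l.Chain' (fun a b => a.2 ≤ b.2)) :
    ∀ e ∈ l.dropWhile (fun e => decide (e.2 = 0)), 0 < e.2 := by
  haveI : IsTrans (α × ℝ) (fun a b => a.2 ≤ b.2) := ⟨fun _ _ _ => le_trans⟩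
  induction l with
  | nil => simp
  | cons x xs ih =>
    by_cases hx : x.2 = 0
    · rw [List.dropWhile_cons_of_pos (by simp [hx])]
      exact ih (fun e he => hnn e (List.mem_cons_of_mem _ he)) hmono.tail
    · rw [List.dropWhile_cons_of_neg (by simp [hx])]
      intro e he
      have hx0 : 0 < x.2 := lt_of_le_of_ne (hnn x List.mem_cons_self) (Ne.symm hx)
      rcases List.mem_cons.mp he with rfl | he
      · exact hx0
      · have hp := (List.isChain_iff_pairwise).mp hmono
        exact lt_of_lt_of_le hx0 (List.rel_of_pairwise_cons hp he)

/-- `ν(w₁) = ν(w₂)` iff the words decompose as `wᵢ = uᵢ vᵢ` with all events of `uᵢ`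
occurring at time 0 and `d(v₁,v₂) = 0`. -/
theorem nu_eq_iff {α : Type*} (w₁ w₂ : List (α × ℝ))
    (h₁nn : ∀ e ∈ w₁, 0 ≤ e.2) (h₂nn : ∀ e ∈ w₂, 0 ≤ e.2)
    (h₁mono : w₁.Chain' (fun a b => a.2 ≤ b.2)) (h₂mono : w₂.Chain' (fun a b => a.2 ≤ b.2)) :
    nuAbs w₁ = nuAbs w₂ ↔
      ∃ u₁ v₁ u₂ v₂ : List (α × ℝ),
        w₁ = u₁ ++ v₁ ∧ w₂ = u₂ ++ v₂ ∧
        (∀ e ∈ u₁, e.2 = 0) ∧ (∀ e ∈ u₂, e.2 = 0) ∧ tdist v₁ v₂ = 0 := by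
  classical
  set p : α × ℝ → Bool := fun e => decide (e.2 = 0) with hp
  constructor
  · intro h
    have key : ∀ (wa wb : List (α × ℝ)), (∀ e ∈ wa, 0 ≤ e.2) →
        wa.Chain' (fun a b => a.2 ≤ b.2) → nuAbs wa = nuAbs wb →
        ∀ x ∈ wa.dropWhile p, x ∈ wb.dropWhile p := by
      intro wa wb hnn hm hab x hx
      have hpos : 0 < x.2 := dropWhile_pos wa hnn hm x hx
      have hxa : x ∈ wa := (List.dropWhile_sublist p).mem hx
      have hxb : x ∈ wb := by
        have h2 := congrFun hab x.2
        simp only [nuAbs, if_pos hpos] at h2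
        have h3 : x.1 ∈ {a | (a, x.2) ∈ wa} := by simpa using hxa
        rw [h2] at h3
        simpa using h3
      rw [← List.takeWhile_append_dropWhile (p := p) (l := wb), List.mem_append] at hxb
      rcases hxb with h1 | h1
      · have := List.mem_takeWhile_imp h1
        simp only [hp, decide_eq_true_eq] at this
        exact absurd this hpos.ne'
      · exact h1
    refine ⟨w₁.takeWhile p, w₁.dropWhile p, w₂.takeWhile p, w₂.dropWhile p,
      (List.takeWhile_append_dropWhile ..).symm, (List.takeWhile_append_dropWhile ..).symm,
      ?_, ?_, ?_⟩
    · intro e he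
      have := List.mem_takeWhile_imp he
      simpa [hp] using this
    · intro e he
      have := List.mem_takeWhile_imp he
      simpa [hp] using this
    · exact tdist_eq_zero.mpr ⟨key w₁ w₂ h₁nn h₁mono h, key w₂ w₁ h₂nn h₂mono h.symm⟩
  · rintro ⟨u₁, v₁, u₂, v₂, rfl, rfl, hu₁, hu₂, hd⟩
    rw [tdist_eq_zero] at hd
    funext t
    unfold nuAbs
    by_cases ht : 0 < t
    · simp only [if_pos ht]
      ext a
      simp only [Set.mem_setOf_eq, List.mem_append]
      constructor
      · rintro (h' | h')
        · exact absurd (hu₁ _ h') ht.ne'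
        · exact Or.inr (hd.1 _ h')
      · rintro (h' | h')
        · exact absurd (hu₂ _ h') ht.ne'
        · exact Or.inr (hd.2 _ h')
    · simp [ht]
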